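/- arXiv:2411.11604 — 3 statements merged into one kernel-verified Lean document; each statement's English description precedes it below -/
import Mathlib

section
/- Let α ∈ ℂ. For n ≥ 2 set N_n := ⌊log₂ n⌋ and ε_n := (e · max{2, |α|²} / N_n)^{N_n}. Then for every n ≥ 2 one has e^{−|α|²} · ∑_{j=0}^{N_n} |α|^{2j} / j! ≥ 1 − ε_n, and moreover lim_{n→∞} n · ε_n = 0. -/
set_option maxHeartbeats 1000000

open Filter BigOperators Finset

lemma real_exp_tsum (x : ℝ) : Real.exp x = ∑' n : ℕ, x ^ n / (Nat.factorial n : ℝ) := by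
  rw [Real.exp_eq_exp_ℝ, NormedSpace.exp_eq_tsum_div]

lemma exp_tail_le {a : ℝ} (ha : 0 ≤ a) (N : ℕ) :
    Real.exp a - ∑ j ∈ range (N + 1), a ^ j / (Nat.factorial j : ℝ) ≤
      a ^ (N + 1) / (Nat.factorial (N + 1) : ℝ) * Real.exp a := by
  have hsumm := Real.summable_pow_div_factorial a
  have h := Summable.sum_add_tsum_nat_add (N + 1) hsumm
  have hbound : ∀ k : ℕ, a ^ (k + (N + 1)) / (Nat.factorial (k + (N + 1)) : ℝ) ≤
      a ^ (N + 1) / (Nat.factorial (N + 1) : ℝ) * (a ^ k / (Nat.factorial k : ℝ)) := by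
    intro k
    rw [pow_add, div_mul_div_comm, mul_comm (a ^ (N+1)) (a ^ k)]
    apply div_le_div_of_nonneg_left (by positivity) (by positivity)
    have hd : Nat.factorial (N+1) * Nat.factorial k ∣ Nat.factorial (k + (N+1)) := by
      rw [mul_comm]; exact Nat.factorial_mul_factorial_dvd_factorial_add k (N+1)
    exact_mod_cast Nat.le_of_dvd (Nat.factorial_pos _) hd
  have key : (∑' k : ℕ, a ^ (k + (N + 1)) / (Nat.factorial (k + (N + 1)) : ℝ)) ≤
      a ^ (N + 1) / (Nat.factorial (N + 1) : ℝ) * Real.exp a := by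
    rw [real_exp_tsum, ← tsum_mul_left]
    exact Summable.tsum_le_tsum hbound ((summable_nat_add_iff (N+1)).mpr hsumm) (hsumm.mul_left _)
  have he : Real.exp a = ∑' n : ℕ, a ^ n / (Nat.factorial n : ℝ) := real_exp_tsum a
  linarith

lemma self_pow_div_factorial_le (m : ℕ) :
    (m : ℝ) ^ m / (Nat.factorial m : ℝ) ≤ Real.exp m := by
  refine le_trans ?_ (Real.sum_le_exp_of_nonneg (Nat.cast_nonneg m) (m + 1))
  exact Finset.single_le_sum (f := fun i => (m : ℝ) ^ i / (Nat.factorial i : ℝ))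
    (fun i _ => by positivity) (self_mem_range_succ m)

lemma pow_div_factorial_le {a : ℝ} (ha : 0 ≤ a) {m : ℕ} (hm : 1 ≤ m) :
    a ^ m / (Nat.factorial m : ℝ) ≤ (Real.exp 1 * a / m) ^ m := by
  have hm0 : (0 : ℝ) < m := by exact_mod_cast hm
  have hf : (0 : ℝ) < (Nat.factorial m : ℝ) := by exact_mod_cast Nat.factorial_pos m
  have h1 : (m : ℝ) ^ m ≤ Real.exp m * (Nat.factorial m : ℝ) :=
    (div_le_iff₀ hf).1 (self_pow_div_factorial_le m)
  have he : Real.exp 1 ^ m = Real.exp m := by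
    rw [← Real.exp_nat_mul]; ring_nf
  rw [div_pow, mul_pow, div_le_div_iff₀ hf (by positivity), he]
  have hpow : 0 ≤ a ^ m := by positivity
  nlinarith [mul_le_mul_of_nonneg_left h1 hpow]

/-- Lemma 2: for `α ∈ ℂ`, with `N_n = ⌊log₂ n⌋` and
`ε_n = (e · max{2, |α|²} / N_n)^{N_n}`, the truncated coherent-state weight
satisfies `e^{-|α|²} ∑_{j=0}^{N_n} |α|^{2j}/j! ≥ 1 - ε_n` for all `n ≥ 2`,
and `n · ε_n → 0`. -/
theorem coherent_state_projection_bound (α : ℂ) :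
    (∀ n : ℕ, 2 ≤ n →
      1 - (Real.exp 1 * max 2 (‖α‖ ^ 2) / (Nat.log 2 n : ℝ)) ^ (Nat.log 2 n)
        ≤ Real.exp (-(‖α‖ ^ 2)) *
            ∑ j ∈ Finset.range (Nat.log 2 n + 1),
              ‖α‖ ^ (2 * j) / (Nat.factorial j : ℝ))
    ∧ Tendsto
        (fun n : ℕ => (n : ℝ) *
          (Real.exp 1 * max 2 (‖α‖ ^ 2) / (Nat.log 2 n : ℝ)) ^ (Nat.log 2 n))
        atTop (nhds 0) := by
  set a : ℝ := ‖α‖ ^ 2 with ha_def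
  have ha : 0 ≤ a := by positivity
  set M : ℝ := max 2 a with hM_def
  have hM2 : (2 : ℝ) ≤ M := le_max_left _ _
  have haM : a ≤ M := le_max_right _ _
  have hMpos : (0 : ℝ) < M := by linarith
  constructor
  · intro n hn
    set N : ℕ := Nat.log 2 n with hN_def
    have hn0 : n ≠ 0 := by omega
    have hN1 : 1 ≤ N :=
      (Nat.le_log_iff_pow_le one_lt_two hn0).2 (show 2 ^ 1 ≤ n by simpa)
    have hN0 : (0 : ℝ) < N := by exact_mod_cast hN1
    have hsum_eq : ∑ j ∈ Finset.range (N + 1), ‖α‖ ^ (2 * j) / (Nat.factorial j : ℝ)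
        = ∑ j ∈ Finset.range (N + 1), a ^ j / (Nat.factorial j : ℝ) := by
      refine Finset.sum_congr rfl fun j _ => ?_
      rw [pow_mul]
    rw [hsum_eq]
    have hSnonneg : 0 ≤ ∑ j ∈ Finset.range (N + 1), a ^ j / (Nat.factorial j : ℝ) := by
      apply Finset.sum_nonneg; intro j _; positivity
    by_cases hc : 1 ≤ Real.exp 1 * M / N
    · have h1 : (1 : ℝ) ≤ (Real.exp 1 * M / N) ^ N := one_le_pow₀ hc
      have : 0 ≤ Real.exp (-a) * ∑ j ∈ Finset.range (N + 1), a ^ j / (Nat.factorial j : ℝ) :=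
        mul_nonneg (Real.exp_pos _).le hSnonneg
      linarith
    · push_neg at hc
      have hx0 : 0 ≤ Real.exp 1 * M / (N + 1 : ℝ) := by positivity
      have hchain : a ^ (N + 1) / (Nat.factorial (N + 1) : ℝ) ≤ (Real.exp 1 * M / N) ^ N := by
        calc a ^ (N + 1) / (Nat.factorial (N + 1) : ℝ)
            ≤ (Real.exp 1 * a / (N + 1 : ℕ)) ^ (N + 1) := pow_div_factorial_le ha (by omega)
          _ ≤ (Real.exp 1 * M / (N + 1 : ℝ)) ^ (N + 1) := by
              push_cast
              gcongr
          _ ≤ (Real.exp 1 * M / (N + 1 : ℝ)) ^ N := by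
              apply pow_le_pow_of_le_one hx0 _ (by omega)
              calc Real.exp 1 * M / (N + 1 : ℝ) ≤ Real.exp 1 * M / N := by
                    apply div_le_div_of_nonneg_left (by positivity) hN0 (by linarith)
                _ ≤ 1 := hc.le
          _ ≤ (Real.exp 1 * M / N) ^ N := by
              gcongr (?_ / ?_) ^ N <;> first | positivity | linarith
      have key := exp_tail_le ha N
      have e1 : Real.exp (-a) * Real.exp a = 1 := by
        rw [← Real.exp_add]; simp
      have hmul := mul_le_mul_of_nonneg_left key (Real.exp_pos (-a)).le
      rw [mul_sub, mul_comm (Real.exp (-a)) (a ^ (N + 1) / (Nat.factorial (N + 1) : ℝ) * Real.exp a),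
        mul_assoc, mul_comm (Real.exp a) (Real.exp (-a)), e1, mul_one] at hmul
      linarith
  · set C : ℝ := Real.exp 1 * M with hC_def
    have hC0 : 0 < C := by positivity
    have hlog : Tendsto (Nat.log 2) atTop atTop := by
      apply tendsto_atTop_atTop.2
      intro b
      refine ⟨2 ^ b, fun m hm => ?_⟩
      have hm0 : m ≠ 0 := Nat.one_le_iff_ne_zero.mp (le_trans Nat.one_le_two_pow hm)
      exact (Nat.le_log_iff_pow_le one_lt_two hm0).2 hm
    have hg : Tendsto (fun k : ℕ => 2 * (2 * C / (k : ℝ)) ^ k) atTop (nhds 0) := by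
      have hhalf : Tendsto (fun k : ℕ => (2 : ℝ) * (1 / 2) ^ k) atTop (nhds 0) := by
        have h2 := tendsto_pow_atTop_nhds_zero_of_lt_one (by norm_num : (0:ℝ) ≤ 1/2)
          (by norm_num : (1:ℝ)/2 < 1)
        simpa using h2.const_mul (2 : ℝ)
      apply squeeze_zero' ?_ ?_ hhalf
      · filter_upwards [eventually_ge_atTop 1] with k hk
        positivity
      · filter_upwards [eventually_ge_atTop (max 1 ⌈4 * C⌉₊)] with k hk
        have hk1 : (1 : ℝ) ≤ k := by exact_mod_cast le_trans (le_max_left _ _) hk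
        have hkC : 4 * C ≤ k := by
          have h := le_trans (le_max_right _ _) hk
          calc 4 * C ≤ (⌈4 * C⌉₊ : ℝ) := Nat.le_ceil _
            _ ≤ k := by exact_mod_cast h
        have hq : 2 * C / (k : ℝ) ≤ 1 / 2 := by
          rw [div_le_div_iff₀ (by linarith) (by norm_num)]
          linarith
        have h0 : 0 ≤ 2 * C / (k : ℝ) := by positivity
        exact mul_le_mul_of_nonneg_left (pow_le_pow_left₀ h0 hq k) (by norm_num)
    have hcomp : Tendsto (fun n : ℕ => 2 * (2 * C / (Nat.log 2 n : ℝ)) ^ (Nat.log 2 n))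
        atTop (nhds 0) := hg.comp hlog
    apply squeeze_zero' ?_ ?_ hcomp
    · filter_upwards [eventually_ge_atTop 2] with n hn
      positivity
    · filter_upwards [eventually_ge_atTop 2] with n hn
      set N : ℕ := Nat.log 2 n with hN_def
      have hnlt : (n : ℝ) ≤ 2 ^ (N + 1) := by
        exact_mod_cast (Nat.lt_pow_succ_log_self one_lt_two n).le
      calc (n : ℝ) * (C / (N : ℝ)) ^ N
          ≤ 2 ^ (N + 1) * (C / (N : ℝ)) ^ N :=
            mul_le_mul_of_nonneg_right hnlt (by positivity)
        _ = 2 * (2 * C / (N : ℝ)) ^ N := by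
            rw [mul_div_assoc, mul_pow, pow_succ]; ring
end

section
/- Let X ⊂ ℂ be a finite nonempty set. For n ≥ 2 and α ∈ ℂ define p_n(α) := e^{−|α|²} · ∑_{j=0}^{⌊log₂ n⌋} |α|^{2j} / j!. Then lim_{n→∞} min_{x : Fin n → X} ∏_{i=1}^{n} p_n(x_i) = 1; equivalently, for every δ > 0 there exists n₀ such that for all n ≥ n₀ and all sequences x₁,…,x_n with entries in X, one has ∏_{i=1}^{n} p_n(x_i) ≥ 1 − δ. -/
open BigOperators

/-- The truncated coherent-state weight
`p_n(α) = e^{-|α|²} ∑_{j=0}^{⌊log₂ n⌋} |α|^{2j}/j!`. -/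
noncomputable def truncWeight (n : ℕ) (α : ℂ) : ℝ :=
  Real.exp (-(‖α‖ ^ 2)) *
    ∑ j ∈ Finset.range (Nat.log 2 n + 1),
      ‖α‖ ^ (2 * j) / (Nat.factorial j : ℝ)

/-- Tail bound for the exponential series. -/
lemma exp_tail_bound {r : ℝ} (hr : 0 ≤ r) (m : ℕ) :
    Real.exp r - ∑ j ∈ Finset.range (m + 1), r ^ j / (Nat.factorial j : ℝ)
      ≤ r ^ (m + 1) / (Nat.factorial (m + 1) : ℝ) * Real.exp r := by
  have hsum : Summable (fun j : ℕ => r ^ j / (Nat.factorial j : ℝ)) :=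
    Real.summable_pow_div_factorial r
  have hexp : Real.exp r = ∑' j : ℕ, r ^ j / (Nat.factorial j : ℝ) := by
    rw [Real.exp_eq_exp_ℝ, NormedSpace.exp_eq_tsum_div]
  have hsplit := hsum.sum_add_tsum_nat_add (m + 1)
  have htail : Real.exp r - ∑ j ∈ Finset.range (m + 1), r ^ j / (Nat.factorial j : ℝ)
      = ∑' k : ℕ, r ^ (k + (m + 1)) / (Nat.factorial (k + (m + 1)) : ℝ) := by
    rw [hexp, ← hsplit]; ring
  rw [htail]
  have hsum2 : Summable (fun k : ℕ =>
      r ^ (m + 1) / (Nat.factorial (m + 1) : ℝ) * (r ^ k / (Nat.factorial k : ℝ))) :=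
    hsum.mul_left _
  calc ∑' k : ℕ, r ^ (k + (m + 1)) / (Nat.factorial (k + (m + 1)) : ℝ)
      ≤ ∑' k : ℕ, r ^ (m + 1) / (Nat.factorial (m + 1) : ℝ) * (r ^ k / (Nat.factorial k : ℝ)) := by
        refine Summable.tsum_le_tsum (fun k => ?_) ((hsum.comp_injective
          (add_left_injective (m + 1)))) hsum2
        have hfac : ((Nat.factorial (m + 1) : ℝ) * (Nat.factorial k : ℝ))
            ≤ (Nat.factorial (k + (m + 1)) : ℝ) := by
          have := Nat.factorial_mul_factorial_dvd_factorial_add (m + 1) k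
          have hle := Nat.le_of_dvd (Nat.factorial_pos _) this
          rw [Nat.add_comm k (m+1)]
          exact_mod_cast hle
        rw [pow_add, mul_comm (r ^ k)]
        rw [div_le_iff₀ (by positivity)]
        have h1 : r ^ (m + 1) * r ^ k * ((Nat.factorial (m + 1) : ℝ) * (Nat.factorial k : ℝ))
            ≤ r ^ (m + 1) * r ^ k * (Nat.factorial (k + (m + 1)) : ℝ) := by
          apply mul_le_mul_of_nonneg_left hfac (by positivity)
        calc r ^ (m + 1) * r ^ k
            = (r ^ (m + 1) / (Nat.factorial (m + 1) : ℝ) * (r ^ k / (Nat.factorial k : ℝ)))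
                * ((Nat.factorial (m + 1) : ℝ) * (Nat.factorial k : ℝ)) := by
              field_simp
          _ ≤ _ := by
              apply mul_le_mul_of_nonneg_left hfac (by positivity)
    _ = r ^ (m + 1) / (Nat.factorial (m + 1) : ℝ) * Real.exp r := by
        rw [tsum_mul_left, hexp]

/-- `1 - truncWeight n α` bound. -/
lemma truncWeight_le_one (n : ℕ) (α : ℂ) : truncWeight n α ≤ 1 := by
  unfold truncWeight
  set r := ‖α‖ ^ 2 with hr
  have hr0 : 0 ≤ r := by positivity
  have hsum : ∑ j ∈ Finset.range (Nat.log 2 n + 1), r ^ j / (Nat.factorial j : ℝ)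
      ≤ Real.exp r := Real.sum_le_exp_of_nonneg hr0 _
  have : ∑ j ∈ Finset.range (Nat.log 2 n + 1),
      ‖α‖ ^ (2 * j) / (Nat.factorial j : ℝ)
      = ∑ j ∈ Finset.range (Nat.log 2 n + 1), r ^ j / (Nat.factorial j : ℝ) := by
    refine Finset.sum_congr rfl fun j _ => ?_
    rw [hr, ← pow_mul]
  rw [this]
  calc Real.exp (-r) * ∑ j ∈ Finset.range (Nat.log 2 n + 1), r ^ j / (Nat.factorial j : ℝ)
      ≤ Real.exp (-r) * Real.exp r := by
        apply mul_le_mul_of_nonneg_left hsum (Real.exp_pos _).le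
    _ = 1 := by rw [← Real.exp_add]; simp

lemma truncWeight_nonneg (n : ℕ) (α : ℂ) : 0 ≤ truncWeight n α := by
  unfold truncWeight
  positivity

lemma one_sub_truncWeight_le (n : ℕ) (α : ℂ) :
    1 - truncWeight n α ≤
      (‖α‖ ^ 2) ^ (Nat.log 2 n + 1) / (Nat.factorial (Nat.log 2 n + 1) : ℝ) := by
  unfold truncWeight
  set r := ‖α‖ ^ 2 with hr
  have hr0 : 0 ≤ r := by positivity
  set m := Nat.log 2 n with hm
  have : ∑ j ∈ Finset.range (m + 1),
      ‖α‖ ^ (2 * j) / (Nat.factorial j : ℝ)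
      = ∑ j ∈ Finset.range (m + 1), r ^ j / (Nat.factorial j : ℝ) := by
    refine Finset.sum_congr rfl fun j _ => ?_
    rw [hr, ← pow_mul]
  rw [this]
  have h := exp_tail_bound hr0 m
  have key : Real.exp (-r) * (Real.exp r - r ^ (m + 1) / (Nat.factorial (m + 1) : ℝ) * Real.exp r)
      ≤ Real.exp (-r) * ∑ j ∈ Finset.range (m + 1), r ^ j / (Nat.factorial j : ℝ) := by
    apply mul_le_mul_of_nonneg_left (by linarith) (Real.exp_pos _).le
  have hrw : Real.exp (-r) * (Real.exp r - r ^ (m + 1) / (Nat.factorial (m + 1) : ℝ) * Real.exp r)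
      = 1 - r ^ (m + 1) / (Nat.factorial (m + 1) : ℝ) := by
    have : Real.exp (-r) * Real.exp r = 1 := by rw [← Real.exp_add]; simp
    calc Real.exp (-r) * (Real.exp r - r ^ (m + 1) / (Nat.factorial (m + 1) : ℝ) * Real.exp r)
        = Real.exp (-r) * Real.exp r
            - r ^ (m + 1) / (Nat.factorial (m + 1) : ℝ) * (Real.exp (-r) * Real.exp r) := by ring
      _ = 1 - r ^ (m + 1) / (Nat.factorial (m + 1) : ℝ) := by rw [this]; ring
  linarith [key, hrw.symm.le, hrw.le]

/-- Weierstrass product inequality. -/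
lemma one_sub_sum_le_prod {ι : Type*} (s : Finset ι) (f : ι → ℝ)
    (h0 : ∀ i ∈ s, 0 ≤ f i) (h1 : ∀ i ∈ s, f i ≤ 1) :
    1 - ∑ i ∈ s, (1 - f i) ≤ ∏ i ∈ s, f i := by
  induction s using Finset.cons_induction with
  | empty => simp
  | cons a s ha ih =>
    rw [Finset.sum_cons, Finset.prod_cons]
    have h0a := h0 a (Finset.mem_cons_self a s)
    have h1a := h1 a (Finset.mem_cons_self a s)
    have h0' : ∀ i ∈ s, 0 ≤ f i := fun i hi => h0 i (Finset.mem_cons_of_mem hi)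
    have h1' : ∀ i ∈ s, f i ≤ 1 := fun i hi => h1 i (Finset.mem_cons_of_mem hi)
    have ih' := ih h0' h1'
    have hprod0 : 0 ≤ ∏ i ∈ s, f i := Finset.prod_nonneg h0'
    have hsum0 : 0 ≤ ∑ i ∈ s, (1 - f i) :=
      Finset.sum_nonneg fun i hi => by linarith [h1' i hi]
    by_cases hc : 0 ≤ 1 - ∑ i ∈ s, (1 - f i)
    · calc 1 - ((1 - f a) + ∑ i ∈ s, (1 - f i))
          = f a - ∑ i ∈ s, (1 - f i) := by ring
        _ ≤ f a - f a * ∑ i ∈ s, (1 - f i) := by nlinarith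
        _ = f a * (1 - ∑ i ∈ s, (1 - f i)) := by ring
        _ ≤ f a * ∏ i ∈ s, f i := by nlinarith
    · push_neg at hc
      calc 1 - ((1 - f a) + ∑ i ∈ s, (1 - f i))
          ≤ 1 - ∑ i ∈ s, (1 - f i) := by linarith
        _ ≤ 0 := by linarith
        _ ≤ f a * ∏ i ∈ s, f i := by positivity

/-- Lemma 3: for a finite nonempty alphabet `X ⊂ ℂ`, the overlap of any
length-`n` codeword with its projective approximation,
`∏ i, p_n(x i)`, converges to `1` uniformly over codewords:
for every `δ > 0` there is `n₀` such that for every `n ≥ n₀` and every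
sequence with entries in `X`, `∏ i, p_n(x i) ≥ 1 - δ`. -/
theorem truncWeight_prod_uniform_convergence
    (X : Finset ℂ) (hX : X.Nonempty) :
    ∀ δ : ℝ, 0 < δ → ∃ n₀ : ℕ, ∀ n : ℕ, n₀ ≤ n →
      ∀ x : Fin n → ℂ, (∀ i, x i ∈ X) →
        1 - δ ≤ ∏ i : Fin n, truncWeight n (x i) := by
  intro δ hδ
  set C : ℝ := X.sup' hX fun a => ‖a‖ ^ 2 with hC
  have hC0 : 0 ≤ C := by
    obtain ⟨a, ha⟩ := hX
    exact le_trans (by positivity) (Finset.le_sup' (fun a => ‖a‖ ^ 2) ha)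
  -- choose M so that (2C)^k / k! ≤ δ for k ≥ M
  have htend := FloorSemiring.tendsto_pow_div_factorial_atTop (K := ℝ) (2 * C)
  have hev : ∀ᶠ k in Filter.atTop, (2 * C) ^ k / (Nat.factorial k : ℝ) ≤ δ :=
    htend.eventually (by
      filter_upwards [eventually_le_nhds (by linarith : (0:ℝ) < δ)] with y hy
      -- this eventually is on values near 0
      exact hy)
  obtain ⟨M, hM⟩ := hev.exists_forall_of_atTop
  refine ⟨2 ^ M, fun n hn x hx => ?_⟩
  have hn0 : n ≠ 0 := by
    intro h; rw [h] at hn; exact absurd hn (by simpa using Nat.pos_of_ne_zero (by positivity))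
  set m := Nat.log 2 n with hm
  have hMm : M ≤ m := (Nat.le_log_iff_pow_le one_lt_two hn0).mpr hn
  -- bound each factor
  have hterm : ∀ i : Fin n, 1 - truncWeight n (x i)
      ≤ C ^ (m + 1) / (Nat.factorial (m + 1) : ℝ) := by
    intro i
    refine le_trans (one_sub_truncWeight_le n (x i)) ?_
    have hfac : (0:ℝ) < (Nat.factorial (m + 1) : ℝ) := by positivity
    have hle : (‖x i‖ ^ 2) ^ (m + 1) ≤ C ^ (m + 1) :=
      pow_le_pow_left₀ (by positivity)
        (Finset.le_sup' (fun a => ‖a‖ ^ 2) (hx i)) _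
    show (‖x i‖ ^ 2) ^ (m + 1) / (Nat.factorial (m + 1) : ℝ)
      ≤ C ^ (m + 1) / (Nat.factorial (m + 1) : ℝ)
    gcongr
  have hsum : ∑ i : Fin n, (1 - truncWeight n (x i)) ≤ δ := by
    calc ∑ i : Fin n, (1 - truncWeight n (x i))
        ≤ ∑ _i : Fin n, C ^ (m + 1) / (Nat.factorial (m + 1) : ℝ) :=
          Finset.sum_le_sum fun i _ => hterm i
      _ = (n : ℝ) * (C ^ (m + 1) / (Nat.factorial (m + 1) : ℝ)) := by
          simp [Finset.sum_const, mul_comm]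
      _ ≤ (2 ^ (m + 1) : ℝ) * (C ^ (m + 1) / (Nat.factorial (m + 1) : ℝ)) := by
          have hlt : (n : ℝ) ≤ (2 : ℝ) ^ (m + 1) := by
            have := Nat.lt_pow_succ_log_self (b := 2) one_lt_two n
            exact_mod_cast this.le
          apply mul_le_mul_of_nonneg_right hlt (by positivity)
      _ = (2 * C) ^ (m + 1) / (Nat.factorial (m + 1) : ℝ) := by
          rw [mul_pow]; ring
      _ ≤ δ := hM (m + 1) (by omega)
  calc 1 - δ ≤ 1 - ∑ i : Fin n, (1 - truncWeight n (x i)) := by linarith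
    _ ≤ ∏ i : Fin n, truncWeight n (x i) :=
        one_sub_sum_le_prod _ _ (fun i _ => truncWeight_nonneg n (x i))
          (fun i _ => truncWeight_le_one n (x i))
end

section
/- With g(x) := (x+1)·log₂(x+1) − x·log₂(x) for x > 0, the ratio log₂(1 + E) / g(E) tends to 0 as E → 0⁺. -/
open Filter

/-- The Gordon function `g(x) = (x+1) log₂(x+1) - x log₂ x`. -/
noncomputable def gordon (x : ℝ) : ℝ :=
  (x + 1) * Real.logb 2 (x + 1) - x * Real.logb 2 x

private lemma div_div_div_cancel_aux (a b c : ℝ) (hc : c ≠ 0) :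
    (a / c) / (b / c) = a / b := by
  rcases eq_or_ne b 0 with rb | rb
  · simp [rb]
  · field_simp

private lemma tendsto_log_one_add_div :
    Tendsto (fun E : ℝ => Real.log (1 + E) / E) (nhdsWithin 0 (Set.Ioi 0)) (nhds 1) := by
  have h : HasDerivAt (fun E : ℝ => Real.log (1 + E)) 1 0 := by
    have := (Real.hasDerivAt_log (by norm_num : (1:ℝ) + 0 ≠ 0)).comp 0
      ((hasDerivAt_const 0 (1:ℝ)).add (hasDerivAt_id 0))
    simpa [Function.comp_def] using this
  have := h.hasDerivWithinAt (s := Set.Ioi 0)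
  have hs := hasDerivWithinAt_iff_tendsto_slope.mp this
  have : Tendsto (slope (fun E : ℝ => Real.log (1 + E)) 0)
      (nhdsWithin 0 (Set.Ioi 0)) (nhds 1) := by
    refine hs.mono_left (nhdsWithin_mono _ ?_)
    intro x hx
    exact ⟨hx, ne_of_gt hx⟩
  refine this.congr' ?_
  filter_upwards [self_mem_nhdsWithin] with x hx
  simp [slope_def_field, div_eq_inv_mul]

/-- The ratio of the shot-noise-limited Shannon capacity to the Holevo
capacity of the pure-loss bosonic channel tends to `0` in the low
photon-number limit: `log₂(1+E)/g(E) → 0` as `E → 0⁺`. -/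
theorem log_div_gordon_tendsto_zero :
    Tendsto (fun E : ℝ => Real.logb 2 (1 + E) / gordon E)
      (nhdsWithin 0 (Set.Ioi 0)) (nhds 0) := by
  have hnum := tendsto_log_one_add_div
  have hE1 : Tendsto (fun E : ℝ => E + 1) (nhdsWithin 0 (Set.Ioi 0)) (nhds 1) := by
    have : Tendsto (fun E : ℝ => E + 1) (nhds 0) (nhds 1) := by
      exact (continuous_id.add continuous_const).tendsto' (0 : ℝ) 1 (by simp)
    exact this.mono_left nhdsWithin_le_nhds
  have hden : Tendsto
      (fun E : ℝ => (E + 1) * (Real.log (1 + E) / E) - Real.log E)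
      (nhdsWithin 0 (Set.Ioi 0)) atTop := by
    have hprod : Tendsto (fun E : ℝ => (E + 1) * (Real.log (1 + E) / E))
        (nhdsWithin 0 (Set.Ioi 0)) (nhds 1) := by
      simpa using hE1.mul hnum
    have hlog : Tendsto (fun E : ℝ => -Real.log E) (nhdsWithin 0 (Set.Ioi 0)) atTop :=
      tendsto_neg_atBot_atTop.comp Real.tendsto_log_nhdsGT_zero
    simpa [sub_eq_add_neg] using hprod.add_atTop hlog
  have key := hnum.div_atTop hden
  refine key.congr' ?_
  filter_upwards [self_mem_nhdsWithin] with E hE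
  have hE0 : E ≠ 0 := ne_of_gt hE
  have hL : Real.log 2 ≠ 0 := (Real.log_pos one_lt_two).ne'
  simp only [gordon, Real.logb]
  have h1 : (E + 1) * (Real.log (E + 1) / Real.log 2) - E * (Real.log E / Real.log 2)
      = ((E + 1) * Real.log (E + 1) - E * Real.log E) / Real.log 2 := by ring
  have h2 : (E + 1) * (Real.log (1 + E) / E) - Real.log E
      = ((E + 1) * Real.log (E + 1) - E * Real.log E) / E := by
    rw [add_comm (1:ℝ) E]; field_simp
  rw [h2, h1, div_div_div_cancel_aux _ _ _ hE0, div_div_div_cancel_aux _ _ _ hL,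
    add_comm (1:ℝ) E]
end
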